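/- Let G be a group acting faithfully and transitively on a finite set with point stabilizer H, and let A be a transitive Dedekind subgroup of G (every subgroup of A is normal in A). If G > U > H and G > V > H are distinct maximal chains of subgroups, then the coset action of G on G/U is isomorphic as a permutation action to the action of V on V/H. -/

import Mathlib

open scoped Pointwise

/-- For a faithful transitive action on a finite set with point stabilizer `H`
and a transitive Dedekind subgroup `A`, if `G > U > H` and `G > V > H` are
distinct maximal chains, then the coset action of `G` on `G/U` is isomorphic as
a permutation action to the action of `V` on `V/H`. -/
theorem stmt_11 {G : Type*} [Group G] {X : Type*} [Finite X] [MulAction G X]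
    [MulAction.IsPretransitive G X] [FaithfulSMul G X] (x : X)
    (A U V : Subgroup G)
    (hAH : (A : Set G) * (MulAction.stabilizer G x : Set G) = Set.univ)
    (hDed : ∀ J : Subgroup G, J ≤ A → (J.subgroupOf A).Normal)
    (hHU : MulAction.stabilizer G x < U) (hUtop : U < ⊤)
    (hHV : MulAction.stabilizer G x < V) (hVtop : V < ⊤)
    (hUmax : ∀ W : Subgroup G, ¬(U < W ∧ W < ⊤))
    (hHUmax : ∀ W : Subgroup G, ¬(MulAction.stabilizer G x < W ∧ W < U))
    (hVmax : ∀ W : Subgroup G, ¬(V < W ∧ W < ⊤))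
    (hHVmax : ∀ W : Subgroup G, ¬(MulAction.stabilizer G x < W ∧ W < V))
    (hUV : U ≠ V) :
    ∃ e : (G ⧸ U) ≃ (V ⧸ (MulAction.stabilizer G x).subgroupOf V),
      ∀ σ : Equiv.Perm (G ⧸ U),
        σ ∈ (MulAction.toPermHom G (G ⧸ U)).range ↔
          e.permCongr σ ∈
            (MulAction.toPermHom V
              (V ⧸ (MulAction.stabilizer G x).subgroupOf V)).range := by
  classical
  set H := MulAction.stabilizer G x with hHdef
  -- every subgroup of A is normalized by A
  have hnorm : ∀ J : Subgroup G, J ≤ A → ∀ a ∈ A, ∀ j ∈ J, a * j * a⁻¹ ∈ J := by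
    intro J hJ a ha j hj
    have h1 : (⟨j, hJ hj⟩ : A) ∈ J.subgroupOf A := by
      simpa [Subgroup.mem_subgroupOf] using hj
    have h2 := (hDed J hJ).conj_mem _ h1 ⟨a, ha⟩
    simpa [Subgroup.mem_subgroupOf] using h2
  -- decomposition G = A * H
  have hGdec0 : ∀ g : G, ∃ a ∈ A, ∃ h ∈ H, g = a * h := by
    intro g
    have hg : g ∈ (A : Set G) * (H : Set G) := by rw [hAH]; trivial
    obtain ⟨a, ha, h, hh, hmul⟩ := hg
    exact ⟨a, ha, h, hh, hmul.symm⟩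
  -- A ⊓ H = ⊥
  have hAHbot : ∀ m : G, m ∈ A → m ∈ H → m = 1 := by
    intro m hmA hmH
    have hm1 : ∀ y : X, m • y = y := by
      intro y
      obtain ⟨g, hg⟩ := MulAction.exists_smul_eq G x y
      obtain ⟨a, ha, h, hh, rfl⟩ := hGdec0 g
      have hy : a • x = y := by
        rw [← hg, mul_smul, MulAction.mem_stabilizer_iff.mp hh]
      have hconj : a⁻¹ * m * a ∈ A ⊓ H := by
        have := hnorm (A ⊓ H) inf_le_left a⁻¹ (A.inv_mem ha) m ⟨hmA, hmH⟩
        simpa using this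
      have hfix : (a⁻¹ * m * a) • x = x := MulAction.mem_stabilizer_iff.mp hconj.2
      calc m • y = m • (a • x) := by rw [hy]
        _ = a • ((a⁻¹ * m * a) • x) := by
            rw [← mul_smul, ← mul_smul]
            congr 1
            group
        _ = a • x := by rw [hfix]
        _ = y := hy
    exact eq_of_smul_eq_smul (M := G) (α := X) (fun y => by rw [hm1 y, one_smul])
  -- decompositions of U and V
  have hUdec : ∀ u ∈ U, ∃ k ∈ A ⊓ U, ∃ h ∈ H, u = k * h := by
    intro u hu
    obtain ⟨a, ha, h, hh, rfl⟩ := hGdec0 u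
    have haU : a ∈ U := by
      have := U.mul_mem hu (U.inv_mem (hHU.le hh))
      simpa [mul_assoc] using this
    exact ⟨a, ⟨ha, haU⟩, h, hh, rfl⟩
  have hVdec : ∀ v ∈ V, ∃ l ∈ A ⊓ V, ∃ h ∈ H, v = l * h := by
    intro v hv
    obtain ⟨a, ha, h, hh, rfl⟩ := hGdec0 v
    have haV : a ∈ V := by
      have := V.mul_mem hv (V.inv_mem (hHV.le hh))
      simpa [mul_assoc] using this
    exact ⟨a, ⟨ha, haV⟩, h, hh, rfl⟩
  -- lattice facts
  have hUnotleV : ¬ U ≤ V := fun hle => hUmax V ⟨lt_of_le_of_ne hle hUV, hVtop⟩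
  have hVnotleU : ¬ V ≤ U := fun hle => hVmax U ⟨lt_of_le_of_ne hle (Ne.symm hUV), hUtop⟩
  have hUVH : U ⊓ V = H := by
    have h1 : H ≤ U ⊓ V := le_inf hHU.le hHV.le
    have h2 : U ⊓ V < U :=
      lt_of_le_of_ne inf_le_left (fun he => hUnotleV (inf_eq_left.mp he))
    by_contra hne
    exact hHUmax (U ⊓ V) ⟨lt_of_le_of_ne h1 (fun h => hne h.symm), h2⟩
  have hUsupV : U ⊔ V = ⊤ := by
    by_contra hne
    refine hUmax (U ⊔ V) ⟨?_, lt_of_le_of_ne le_top hne⟩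
    exact lt_of_le_of_ne le_sup_left (fun he => hVnotleU (sup_eq_left.mp he.symm))
  set K := A ⊓ U with hKdef
  set L := A ⊓ V with hLdef
  -- swap lemmas
  have hswapHK : ∀ h ∈ H, ∀ k ∈ K, ∃ k' ∈ K, ∃ h' ∈ H, h * k = k' * h' := by
    intro h hh k hk
    exact hUdec (h * k) (U.mul_mem (hHU.le hh) hk.2)
  have hswapHL : ∀ h ∈ H, ∀ l ∈ L, ∃ l' ∈ L, ∃ h' ∈ H, h * l = l' * h' := by
    intro h hh l hl
    exact hVdec (h * l) (V.mul_mem (hHV.le hh) hl.2)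
  have hswapAK : ∀ a ∈ A, ∀ k ∈ K, ∃ k' ∈ K, a * k = k' * a := by
    intro a ha k hk
    exact ⟨a * k * a⁻¹, hnorm K inf_le_left a ha k hk, by group⟩
  have hswapKA : ∀ a ∈ A, ∀ k ∈ K, ∃ k' ∈ K, k * a = a * k' := by
    intro a ha k hk
    refine ⟨a⁻¹ * k * a, ?_, by group⟩
    have := hnorm K inf_le_left a⁻¹ (A.inv_mem ha) k hk
    simpa using this
  -- G = K * L * H
  have hKLH : ∀ g : G, ∃ k ∈ K, ∃ l ∈ L, ∃ h ∈ H, g = k * l * h := by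
    intro g
    have hg : g ∈ Subgroup.closure ((U : Set G) ∪ (V : Set G)) := by
      rw [Subgroup.closure_union, Subgroup.closure_eq, Subgroup.closure_eq, hUsupV]
      trivial
    induction hg using Subgroup.closure_induction with
    | mem y hy =>
        rcases hy with hy | hy
        · obtain ⟨k, hk, h, hh, rfl⟩ := hUdec y hy
          exact ⟨k, hk, 1, L.one_mem, h, hh, by group⟩
        · obtain ⟨l, hl, h, hh, rfl⟩ := hVdec y hy
          exact ⟨1, K.one_mem, l, hl, h, hh, by group⟩
    | one => exact ⟨1, K.one_mem, 1, L.one_mem, 1, H.one_mem, by group⟩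
    | mul y z hy hz ihy ihz =>
        obtain ⟨k1, hk1, l1, hl1, h1, hh1, rfl⟩ := ihy
        obtain ⟨k2, hk2, l2, hl2, h2, hh2, rfl⟩ := ihz
        obtain ⟨k2', hk2', h1', hh1', e1⟩ := hswapHK h1 hh1 k2 hk2
        obtain ⟨k2'', hk2'', e2⟩ := hswapAK l1 hl1.1 k2' hk2'
        obtain ⟨l2', hl2', h1'', hh1'', e3⟩ := hswapHL h1' hh1' l2 hl2
        refine ⟨k1 * k2'', K.mul_mem hk1 hk2'', l1 * l2', L.mul_mem hl1 hl2',
          h1'' * h2, H.mul_mem hh1'' hh2, ?_⟩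
        calc k1 * l1 * h1 * (k2 * l2 * h2)
            = k1 * (l1 * (h1 * k2) * l2) * h2 := by group
          _ = k1 * (l1 * (k2' * h1') * l2) * h2 := by rw [e1]
          _ = k1 * ((l1 * k2') * (h1' * l2)) * h2 := by group
          _ = k1 * ((k2'' * l1) * (l2' * h1'')) * h2 := by rw [e2, e3]
          _ = k1 * k2'' * (l1 * l2') * (h1'' * h2) := by group
    | inv y hy ihy =>
        obtain ⟨k, hk, l, hl, h, hh, rfl⟩ := ihy
        obtain ⟨l', hl', h', hh', e1⟩ := hswapHL h⁻¹ (H.inv_mem hh) l⁻¹ (L.inv_mem hl)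
        obtain ⟨k', hk', h'', hh'', e2⟩ := hswapHK h' hh' k⁻¹ (K.inv_mem hk)
        obtain ⟨k'', hk'', e3⟩ := hswapAK l' hl'.1 k' hk'
        refine ⟨k'', hk'', l', hl', h'', hh'', ?_⟩
        calc (k * l * h)⁻¹ = (h⁻¹ * l⁻¹) * k⁻¹ := by group
          _ = l' * (h' * k⁻¹) := by rw [e1]; group
          _ = (l' * k') * h'' := by rw [e2]; group
          _ = k'' * l' * h'' := by rw [e3]
  -- A = K * L
  have hAdec : ∀ a ∈ A, ∃ k ∈ K, ∃ l ∈ L, a = k * l := by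
    intro a ha
    obtain ⟨k, hk, l, hl, h, hh, he⟩ := hKLH a
    have hhA : h ∈ A := by
      have : (k * l)⁻¹ * a ∈ A :=
        A.mul_mem (A.inv_mem (A.mul_mem hk.1 hl.1)) ha
      rw [he] at this
      simpa [mul_assoc] using this
    have h1 : h = 1 := hAHbot h hhA hh
    exact ⟨k, hk, l, hl, by rw [he, h1, mul_one]⟩
  -- G = L * U
  have hGLU : ∀ g : G, ∃ l ∈ L, ∃ u ∈ U, g = l * u := by
    intro g
    obtain ⟨a, ha, h, hh, rfl⟩ := hGdec0 g
    obtain ⟨k, hk, l, hl, he⟩ := hAdec a ha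
    obtain ⟨k', hk', e2⟩ := hswapKA l hl.1 k hk
    refine ⟨l, hl, k' * h, U.mul_mem hk'.2 (hHU.le hh), ?_⟩
    rw [he, e2]; group
  -- key conjugation lemma
  have hconjKV : ∀ k ∈ K, ∀ w ∈ V, w⁻¹ * k * w ∈ U := by
    intro k hk w hw
    obtain ⟨l, hl, h, hh, rfl⟩ := hVdec w hw
    have h1 : l⁻¹ * k * l ∈ K := by
      have := hnorm K inf_le_left l⁻¹ (A.inv_mem hl.1) k hk
      simpa using this
    have h2 : h⁻¹ * (l⁻¹ * k * l) * h ∈ U :=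
      U.mul_mem (U.mul_mem (U.inv_mem (hHU.le hh)) h1.2) (hHU.le hh)
    have he : (l * h)⁻¹ * k * (l * h) = h⁻¹ * (l⁻¹ * k * l) * h := by group
    rw [he]; exact h2
  -- the bijection
  let H' := H.subgroupOf V
  let f : V ⧸ H' → G ⧸ U := Quotient.map' (fun v => (v : G)) (by
    intro v w hvw
    rw [QuotientGroup.leftRel_apply] at hvw ⊢
    exact hHU.le (by simpa [H', Subgroup.mem_subgroupOf] using hvw))
  have hf_mk : ∀ v : V, f ((v : V ⧸ H')) = ((v : G) : G ⧸ U) := fun v => rfl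
  have hfinj : Function.Injective f := by
    intro y z
    refine Quotient.inductionOn₂' y z ?_
    intro v w hvw
    have h1 : (v : G)⁻¹ * w ∈ U := QuotientGroup.eq.mp hvw
    have h2 : (v : G)⁻¹ * w ∈ V := V.mul_mem (V.inv_mem v.2) w.2
    have h3 : (v : G)⁻¹ * w ∈ H := by rw [← hUVH]; exact ⟨h1, h2⟩
    refine Quotient.sound' ?_
    rw [QuotientGroup.leftRel_apply]
    simpa [H', Subgroup.mem_subgroupOf] using h3
  have hfsurj : Function.Surjective f := by
    intro z
    refine Quotient.inductionOn' z ?_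
    intro g
    obtain ⟨l, hl, u, hu, rfl⟩ := hGLU g
    refine ⟨((⟨l, hl.2⟩ : V) : V ⧸ H'), ?_⟩
    rw [hf_mk]
    exact QuotientGroup.eq.mpr (by simpa using hu)
  have hfsmul : ∀ (v : V) (y : V ⧸ H'), f (v • y) = (v : G) • f y := by
    intro v y
    refine Quotient.inductionOn' y ?_
    intro w
    rfl
  set e0 : (G ⧸ U) ≃ (V ⧸ H') := (Equiv.ofBijective f ⟨hfinj, hfsurj⟩).symm with he0
  have he0symm : ∀ y : V ⧸ H', e0.symm y = f y := fun y => rfl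
  refine ⟨e0, ?_⟩
  intro σ
  constructor
  · rintro ⟨g, rfl⟩
    obtain ⟨a, ha, h0, hh0, rfl⟩ := hGdec0 g
    obtain ⟨k, hk, l, hl, he⟩ := hAdec a ha
    refine ⟨⟨l * h0, V.mul_mem hl.2 (hHV.le hh0)⟩, ?_⟩
    ext z
    simp only [MulAction.toPermHom_apply, MulAction.toPerm_apply, Equiv.permCongr_apply]
    rw [← Equiv.symm_apply_eq, he0symm, he0symm, hfsmul]
    refine Quotient.inductionOn' z ?_
    intro w
    have hmem : ((l * h0) * (w : G))⁻¹ * ((a * h0) * (w : G)) ∈ U := by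
      have hw' : (l * h0) * (w : G) ∈ V :=
        V.mul_mem (V.mul_mem hl.2 (hHV.le hh0)) w.2
      have h1 := hconjKV k hk _ hw'
      have heq : ((l * h0) * (w : G))⁻¹ * (k * ((l * h0) * (w : G)))
          = ((l * h0) * (w : G))⁻¹ * ((a * h0) * (w : G)) := by
        rw [he]; group
      rw [← heq]
      simpa [mul_assoc] using h1
    calc ((l * h0 : G)) • f (Quotient.mk'' w)
        = (((l * h0) * (w : G) : G) : G ⧸ U) := rfl
      _ = (((a * h0) * (w : G) : G) : G ⧸ U) := QuotientGroup.eq.mpr hmem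
      _ = (a * h0) • f (Quotient.mk'' w) := rfl
  · rintro ⟨v, hv⟩
    refine ⟨(v : G), ?_⟩
    have hv' : e0.permCongr.symm (MulAction.toPermHom V (V ⧸ H') v) = σ := by
      rw [hv, Equiv.symm_apply_apply]
    rw [← hv']
    ext z
    simp only [Equiv.permCongr_symm, Equiv.permCongr_apply, Equiv.symm_symm,
      MulAction.toPermHom_apply, MulAction.toPerm_apply]
    rw [he0symm, hfsmul]
    congr 1
    exact ((he0symm (e0 z)).symm.trans (e0.symm_apply_apply _)).symm
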